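/- Let f : {0,1}^n → Bool and suppose {0,1}^n is partitioned into R subcubes such that f is constant on each subcube of the partition. Then the correlation of f with parity satisfies |#{α ∈ {0,1}^n : f(α) = parity(α)} − #{α ∈ {0,1}^n : f(α) ≠ parity(α)}| ≤ R; equivalently, |P(f(α) = parity(α)) − P(f(α) ≠ parity(α))| ≤ R · 2^(−n) for α chosen uniformly at random. -/

import Mathlib

open Classical

/-- The parity function on `n` variables: the XOR of all coordinates (`true` iff odd parity). -/
def parity (n : ℕ) (α : Fin n → Bool) : Bool :=
  (∑ i : Fin n, (α i).toNat) % 2 == 1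

/-- The subcube defined by a restriction `ρ` (where `ρ i = some b` fixes coordinate `i` to `b`
and `ρ i = none` leaves it free): the set of all points extending `ρ`. -/
def Subcube {n : ℕ} (ρ : Fin n → Option Bool) : Set (Fin n → Bool) :=
  {α | ∀ (i : Fin n) (b : Bool), ρ i = some b → α i = b}

noncomputable def pchar (n : ℕ) (α : Fin n → Bool) : ℤ := if parity n α then 1 else -1

lemma parity_flip {n : ℕ} (α : Fin n → Bool) (i : Fin n) :
    parity n (Function.update α i (!(α i))) = !(parity n α) := by
  unfold parity
  rw [← Finset.add_sum_erase _ _ (Finset.mem_univ i),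
      ← Finset.add_sum_erase _ (fun j => (α j).toNat) (Finset.mem_univ i)]
  have hrest : ∑ j ∈ Finset.univ.erase i, ((Function.update α i (!(α i))) j).toNat
      = ∑ j ∈ Finset.univ.erase i, (α j).toNat := by
    apply Finset.sum_congr rfl
    intro j hj
    rw [Function.update_of_ne (Finset.ne_of_mem_erase hj)]
  rw [hrest, Function.update_self]
  rcases Nat.mod_two_eq_zero_or_one (∑ j ∈ Finset.univ.erase i, (α j).toNat) with h | h <;>
    cases α i <;> simp [Nat.add_mod, h]

lemma pchar_flip {n : ℕ} (α : Fin n → Bool) (i : Fin n) :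
    pchar n (Function.update α i (!(α i))) = -pchar n α := by
  unfold pchar
  rw [parity_flip]
  cases parity n α <;> simp

lemma abs_pchar {n : ℕ} (α : Fin n → Bool) : |pchar n α| = 1 := by
  unfold pchar; split <;> simp

lemma sum_pchar_subcube {n : ℕ} (ρ : Fin n → Option Bool) :
    |∑ α ∈ Finset.univ.filter (· ∈ Subcube ρ), pchar n α| ≤ 1 := by
  by_cases h : ∃ i, ρ i = none
  · obtain ⟨i, hi⟩ := h
    rw [Finset.sum_involution (fun α _ => Function.update α i (!(α i)))
      (fun α _ => by rw [pchar_flip]; ring)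
      (fun α _ _ heq => by
        have := congrFun heq i
        simp at this)
      (fun α hα => by
        simp only [Finset.mem_filter, Finset.mem_univ, true_and] at hα ⊢
        intro j b hj
        have hji : j ≠ i := fun hji => by rw [hji, hi] at hj; cases hj
        rw [Function.update_of_ne hji]
        exact hα j b hj)
      (fun α _ => by simp)]
    norm_num
  · push_neg at h
    calc |∑ α ∈ Finset.univ.filter (· ∈ Subcube ρ), pchar n α|
        ≤ ∑ α ∈ Finset.univ.filter (· ∈ Subcube ρ), |pchar n α| :=
          Finset.abs_sum_le_sum_abs _ _
      _ = (Finset.univ.filter (· ∈ Subcube ρ)).card := by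
          simp [abs_pchar]
      _ ≤ 1 := by
        norm_cast
        apply Finset.card_le_one.2
        intro a ha b hb
        simp only [Finset.mem_filter] at ha hb
        funext j
        obtain ⟨c, hc⟩ := Option.ne_none_iff_exists'.1 (h j)
        rw [ha.2 j c hc, hb.2 j c hc]

lemma pchar_def {n : ℕ} (α : Fin n → Bool) : pchar n α = if parity n α then 1 else -1 := rfl

/-- If `{0,1}^n` is partitioned into `R` subcubes on each of which `f` is constant, then the
correlation of `f` with parity is at most `R · 2^(-n)`: the number of points where `f` agrees
with parity and the number of points where it disagrees differ by at most `R`. -/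
theorem correlation_with_parity_le {n : ℕ} (f : (Fin n → Bool) → Bool)
    (P : Finset (Fin n → Option Bool)) (R : ℕ) (hR : P.card = R)
    (hdisj : ∀ ρ ∈ P, ∀ ρ' ∈ P, ρ ≠ ρ' → Disjoint (Subcube ρ) (Subcube ρ'))
    (hcover : ∀ α : Fin n → Bool, ∃ ρ ∈ P, α ∈ Subcube ρ)
    (hconst : ∀ ρ ∈ P, ∀ α ∈ Subcube ρ, ∀ β ∈ Subcube ρ, f α = f β) :
    |((Finset.univ.filter fun α : Fin n → Bool => f α = parity n α).card : ℤ) -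
        ((Finset.univ.filter fun α : Fin n → Bool => f α ≠ parity n α).card : ℤ)| ≤ (R : ℤ) ∧
    |((Finset.univ.filter fun α : Fin n → Bool => f α = parity n α).card : ℝ) / 2 ^ n -
        ((Finset.univ.filter fun α : Fin n → Bool => f α ≠ parity n α).card : ℝ) / 2 ^ n| ≤
      (R : ℝ) * (2 : ℝ) ^ (-(n : ℝ)) := by
  have key : |((Finset.univ.filter fun α : Fin n → Bool => f α = parity n α).card : ℤ) -
      ((Finset.univ.filter fun α : Fin n → Bool => f α ≠ parity n α).card : ℤ)| ≤ (R : ℤ) := by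
    set g : (Fin n → Bool) → ℤ := fun α => if f α = parity n α then 1 else -1 with hg
    have hA : ((Finset.univ.filter fun α : Fin n → Bool => f α = parity n α).card : ℤ) -
        ((Finset.univ.filter fun α : Fin n → Bool => f α ≠ parity n α).card : ℤ)
        = ∑ α : Fin n → Bool, g α := by
      rw [hg, Finset.sum_ite, Finset.sum_const, Finset.sum_const]
      simp [ne_eq]
      ring
    rw [hA]
    -- partition of univ
    have huniv : (Finset.univ : Finset (Fin n → Bool)) =
        P.biUnion (fun ρ => Finset.univ.filter (· ∈ Subcube ρ)) := by
      ext α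
      simp only [Finset.mem_univ, Finset.mem_biUnion, Finset.mem_filter, true_and, true_iff]
      exact hcover α
    have hdisj' : ∀ ρ ∈ P, ∀ ρ' ∈ P, ρ ≠ ρ' →
        Disjoint (Finset.univ.filter (· ∈ Subcube ρ)) (Finset.univ.filter (· ∈ Subcube ρ')) := by
      intro ρ hρ ρ' hρ' hne
      rw [Finset.disjoint_left]
      intro a ha ha'
      simp only [Finset.mem_filter, Finset.mem_univ, true_and] at ha ha'
      exact Set.disjoint_left.1 (hdisj ρ hρ ρ' hρ' hne) ha ha'
    rw [huniv, Finset.sum_biUnion hdisj']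
    calc |∑ ρ ∈ P, ∑ α ∈ Finset.univ.filter (· ∈ Subcube ρ), g α|
        ≤ ∑ ρ ∈ P, |∑ α ∈ Finset.univ.filter (· ∈ Subcube ρ), g α| :=
          Finset.abs_sum_le_sum_abs _ _
      _ ≤ ∑ _ρ ∈ P, (1 : ℤ) := by
          apply Finset.sum_le_sum
          intro ρ hρ
          by_cases hne : (Finset.univ.filter (· ∈ Subcube ρ)).Nonempty
          · obtain ⟨α0, hα0⟩ := hne
            simp only [Finset.mem_filter, Finset.mem_univ, true_and] at hα0
            have hcst : ∀ α ∈ Finset.univ.filter (· ∈ Subcube ρ), f α = f α0 := by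
              intro α hα
              simp only [Finset.mem_filter, Finset.mem_univ, true_and] at hα
              exact hconst ρ hρ α hα α0 hα0
            cases hc : f α0 with
            | true =>
              have : ∀ α ∈ Finset.univ.filter (· ∈ Subcube ρ), g α = pchar n α := by
                intro α hα
                show (if f α = parity n α then (1:ℤ) else -1) = _
                rw [pchar_def, hcst α hα, hc]
                cases parity n α <;> simp
              rw [Finset.sum_congr rfl this]
              exact sum_pchar_subcube ρ
            | false =>
              have : ∀ α ∈ Finset.univ.filter (· ∈ Subcube ρ), g α = -pchar n α := by
                intro α hα
                show (if f α = parity n α then (1:ℤ) else -1) = _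
                rw [pchar_def, hcst α hα, hc]
                cases parity n α <;> simp
              rw [Finset.sum_congr rfl this, Finset.sum_neg_distrib, abs_neg]
              exact sum_pchar_subcube ρ
          · rw [Finset.not_nonempty_iff_eq_empty.1 hne]
            simp
      _ = (R : ℤ) := by simp [hR]
  refine ⟨key, ?_⟩
  have h2 : (0 : ℝ) < 2 ^ n := by positivity
  have hrpow : (2 : ℝ) ^ (-(n : ℝ)) = ((2 : ℝ) ^ n)⁻¹ := by
    rw [Real.rpow_neg (by norm_num), Real.rpow_natCast]
  rw [hrpow, div_sub_div_same, abs_div, abs_of_pos h2, div_le_iff₀ h2, mul_assoc,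
      inv_mul_cancel₀ h2.ne', mul_one]
  have : |((Finset.univ.filter fun α : Fin n → Bool => f α = parity n α).card : ℝ) -
      ((Finset.univ.filter fun α : Fin n → Bool => f α ≠ parity n α).card : ℝ)| ≤ (R : ℝ) := by
    exact_mod_cast key
  exact this
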